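/- Local differential privacy bounds maximal leakage: if a randomized map f_E : 𝕏 → ℤ satisfies ε-LDP with base 2, i.e., Pr[f_E(x) = z] ≤ 2^ε · Pr[f_E(x') = z] for all x, x' ∈ 𝕏 and z ∈ ℤ, then for Z = f_E(X) with any input distribution P_X of full support, the maximal leakage L(X → Z) = log₂(∑_z max_x P_{Z|X}(z|x)) ≤ ε. -/
import Mathlib


open scoped BigOperators
noncomputable section

/-- A pmf on a finite alphabet. -/
def IsPMF {X : Type} [Fintype X] (p : X → ℝ) : Prop :=
  (∀ x, 0 ≤ p x) ∧ ∑ x, p x = 1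

/-- A Markov kernel (randomized map) from X to Z. -/
def IsKernel {X Z : Type} [Fintype Z] (k : X → Z → ℝ) : Prop :=
  (∀ x z, 0 ≤ k x z) ∧ ∀ x, ∑ z, k x z = 1

/-- Closed form of maximal leakage: L(X → Z) = log₂(∑_z max_x P_{Z|X}(z|x)). -/
def maxLeak {X Z : Type} [Fintype X] [Fintype Z] [Nonempty X] (p : X → Z → ℝ) : ℝ :=
  Real.logb 2 (∑ z, Finset.univ.sup' Finset.univ_nonempty fun x => p x z / ∑ z', p x z')

/-- ε-local differential privacy (base 2) bounds maximal leakage: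
if Pr[f_E(x) = z] ≤ 2^ε · Pr[f_E(x') = z] for all x, x', z, then for Z = f_E(X)
with any full-support input distribution P_X, L(X → Z) ≤ ε. -/
theorem ldp_bounds_maximal_leakage
    {X Z : Type} [Fintype X] [Fintype Z] [Nonempty X] [Nonempty Z]
    (ε : ℝ) (k : X → Z → ℝ) (hk : IsKernel k)
    (hldp : ∀ x x' z, k x z ≤ (2 : ℝ) ^ ε * k x' z)
    (pX : X → ℝ) (hpX : IsPMF pX) (hsupp : ∀ x, 0 < pX x) :
    maxLeak (fun x z => pX x * k x z) ≤ ε := by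
  obtain ⟨hk0, hk1⟩ := hk
  obtain ⟨x0⟩ := ‹Nonempty X›
  have hsimp : ∀ x z, (pX x * k x z) / ∑ z', pX x * k x z' = k x z := by
    intro x z
    rw [← Finset.mul_sum, hk1 x, mul_one, mul_div_assoc]
    field_simp [(hsupp x).ne']
  unfold maxLeak
  have hsum_eq : (∑ z, Finset.univ.sup' Finset.univ_nonempty
      fun x => (fun x z => pX x * k x z) x z / ∑ z', (fun x z => pX x * k x z) x z') =
      ∑ z : Z, Finset.univ.sup' Finset.univ_nonempty fun x => k x z := by
    refine Finset.sum_congr rfl fun z _ => ?_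
    refine Finset.sup'_congr _ rfl fun x _ => hsimp x z
  rw [hsum_eq]
  have hle : (∑ z : Z, Finset.univ.sup' Finset.univ_nonempty fun x => k x z)
      ≤ (2 : ℝ) ^ ε := by
    calc (∑ z : Z, Finset.univ.sup' Finset.univ_nonempty fun x => k x z)
        ≤ ∑ z : Z, (2 : ℝ) ^ ε * k x0 z := by
          refine Finset.sum_le_sum fun z _ => ?_
          exact Finset.sup'_le _ _ fun x _ => hldp x x0 z
      _ = (2 : ℝ) ^ ε := by rw [← Finset.mul_sum, hk1 x0, mul_one]
  have hge : (1 : ℝ) ≤ ∑ z : Z, Finset.univ.sup' Finset.univ_nonempty fun x => k x z := by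
    calc (1 : ℝ) = ∑ z : Z, k x0 z := (hk1 x0).symm
      _ ≤ _ := Finset.sum_le_sum fun z _ =>
          Finset.le_sup' (fun x => k x z) (Finset.mem_univ x0)
  calc Real.logb 2 (∑ z : Z, Finset.univ.sup' Finset.univ_nonempty fun x => k x z)
      ≤ Real.logb 2 ((2 : ℝ) ^ ε) :=
        Real.logb_le_logb_of_le (by norm_num) (lt_of_lt_of_le one_pos hge) hle
    _ = ε := Real.logb_rpow (by norm_num : (0:ℝ) < 2) (by norm_num)
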